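/- There do not exist constants λ > 0 and c > 0 together with a function ψ : R^2 → R that is convex, 1-Lipschitz, of class C^2 on the open strip (−1,1) × (0,1), and satisfies, for every point (y_1, y_2) with |y_1| < 1 and 0 < y_2 ≤ 1/2: (i) 0 ≤ ψ(y_1, y_2) ≤ y_2; (ii) det D^2ψ(y_1, y_2) ≥ λ |∇ψ(y_1, y_2)|; and (iii) |∇ψ(y_1, y_2)| ≥ c / |log y_2|. -/

import Mathlib

open Set MeasureTheory

noncomputable section Stmt16Aux

abbrev E2 : Type := EuclideanSpace ℝ (Fin 2)

def ee (i : Fin 2) : E2 := EuclideanSpace.single i 1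

def pt (a b : ℝ) : E2 := a • ee 0 + b • ee 1

@[simp] lemma pt_apply0 (a b : ℝ) : pt a b 0 = a := by
  simp [pt, ee, EuclideanSpace.single_apply]

@[simp] lemma pt_apply1 (a b : ℝ) : pt a b 1 = b := by
  simp [pt, ee, EuclideanSpace.single_apply]

def Strip : Set E2 := {y | y 0 ∈ Ioo (-1 : ℝ) 1 ∧ y 1 ∈ Ioo (0 : ℝ) 1}

lemma isOpen_strip : IsOpen Strip := by
  have : Strip = ((EuclideanSpace.proj (0 : Fin 2) : E2 →L[ℝ] ℝ) ⁻¹' Ioo (-1) 1) ∩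
      ((EuclideanSpace.proj (1 : Fin 2) : E2 →L[ℝ] ℝ) ⁻¹' Ioo 0 1) := by
    ext y; simp [Strip]
  rw [this]
  exact (isOpen_Ioo.preimage (EuclideanSpace.proj (0 : Fin 2)).continuous).inter
    (isOpen_Ioo.preimage (EuclideanSpace.proj (1 : Fin 2)).continuous)

lemma pt_mem_strip {a b : ℝ} (ha : |a| < 1) (hb0 : 0 < b) (hb1 : b < 1) : pt a b ∈ Strip := by
  constructor <;> simp [abs_lt] at ha ⊢ <;> [exact ha; exact ⟨hb0, hb1⟩]



variable {ψ : E2 → ℝ}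

lemma diff_psi (hC2 : ContDiffOn ℝ 2 ψ Strip) {y : E2} (hy : y ∈ Strip) :
    DifferentiableAt ℝ ψ y :=
  (hC2.contDiffAt (isOpen_strip.mem_nhds hy)).differentiableAt two_ne_zero

lemma diff_fderiv (hC2 : ContDiffOn ℝ 2 ψ Strip) {y : E2} (hy : y ∈ Strip) :
    DifferentiableAt ℝ (fderiv ℝ ψ) y :=
  (((hC2.fderiv_of_isOpen isOpen_strip le_rfl).contDiffAt
    (isOpen_strip.mem_nhds hy))).differentiableAt one_ne_zero

lemma contOn_fderiv2 (hC2 : ContDiffOn ℝ 2 ψ Strip) :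
    ContinuousOn (fderiv ℝ (fderiv ℝ ψ)) Strip :=
  (hC2.fderiv_of_isOpen isOpen_strip le_rfl).continuousOn_fderiv_of_isOpen isOpen_strip le_rfl

def p1 (ψ : E2 → ℝ) (a b : ℝ) : ℝ := fderiv ℝ ψ (pt a b) (ee 0)
def p2 (ψ : E2 → ℝ) (a b : ℝ) : ℝ := fderiv ℝ ψ (pt a b) (ee 1)
def h11 (ψ : E2 → ℝ) (a b : ℝ) : ℝ := fderiv ℝ (fderiv ℝ ψ) (pt a b) (ee 0) (ee 0)
def h22 (ψ : E2 → ℝ) (a b : ℝ) : ℝ := fderiv ℝ (fderiv ℝ ψ) (pt a b) (ee 1) (ee 1)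

lemma hasDerivAt_pt_fst (a b : ℝ) : HasDerivAt (fun x : ℝ => pt x b) (ee 0) a := by
  simpa [pt] using ((hasDerivAt_id a).smul_const (ee 0)).add_const (b • ee 1)

lemma hasDerivAt_pt_snd (a b : ℝ) : HasDerivAt (fun y : ℝ => pt a y) (ee 1) b := by
  simpa [pt] using (((hasDerivAt_id b).smul_const (ee 1)).const_add (a • ee 0))

lemma hasDerivAt_psi_fst (hC2 : ContDiffOn ℝ 2 ψ Strip) {a b : ℝ} (h : pt a b ∈ Strip) :
    HasDerivAt (fun x => ψ (pt x b)) (p1 ψ a b) a :=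
  ((diff_psi hC2 h).hasFDerivAt).comp_hasDerivAt a (hasDerivAt_pt_fst a b)

lemma hasDerivAt_psi_snd (hC2 : ContDiffOn ℝ 2 ψ Strip) {a b : ℝ} (h : pt a b ∈ Strip) :
    HasDerivAt (fun y => ψ (pt a y)) (p2 ψ a b) b :=
  ((diff_psi hC2 h).hasFDerivAt).comp_hasDerivAt b (hasDerivAt_pt_snd a b)

lemma hasDerivAt_p1_fst (hC2 : ContDiffOn ℝ 2 ψ Strip) {a b : ℝ} (h : pt a b ∈ Strip) :
    HasDerivAt (fun x => p1 ψ x b) (h11 ψ a b) a := by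
  have h1 : HasDerivAt (fun x => fderiv ℝ ψ (pt x b))
      (fderiv ℝ (fderiv ℝ ψ) (pt a b) (ee 0)) a :=
    ((diff_fderiv hC2 h).hasFDerivAt).comp_hasDerivAt a (hasDerivAt_pt_fst a b)
  exact (ContinuousLinearMap.apply ℝ ℝ (ee 0)).hasFDerivAt.comp_hasDerivAt a h1

lemma hasDerivAt_p2_snd (hC2 : ContDiffOn ℝ 2 ψ Strip) {a b : ℝ} (h : pt a b ∈ Strip) :
    HasDerivAt (fun y => p2 ψ a y) (h22 ψ a b) b := by
  have h1 : HasDerivAt (fun y => fderiv ℝ ψ (pt a y))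
      (fderiv ℝ (fderiv ℝ ψ) (pt a b) (ee 1)) b :=
    ((diff_fderiv hC2 h).hasFDerivAt).comp_hasDerivAt b (hasDerivAt_pt_snd a b)
  exact (ContinuousLinearMap.apply ℝ ℝ (ee 1)).hasFDerivAt.comp_hasDerivAt b h1

lemma snd_symm (hC2 : ContDiffOn ℝ 2 ψ Strip) {y : E2} (hy : y ∈ Strip) (v w : E2) :
    fderiv ℝ (fderiv ℝ ψ) y v w = fderiv ℝ (fderiv ℝ ψ) y w v := by
  apply second_derivative_symmetric_of_eventually (f := ψ) (f' := fderiv ℝ ψ)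
  · filter_upwards [isOpen_strip.mem_nhds hy] with z hz
    exact (diff_psi hC2 hz).hasFDerivAt
  · exact (diff_fderiv hC2 hy).hasFDerivAt

lemma lineMap_fst (b x : ℝ) :
    (AffineMap.lineMap (b • ee 1) (ee 0 + b • ee 1) : ℝ →ᵃ[ℝ] E2) x = pt x b := by
  rw [AffineMap.lineMap_apply]
  show x • ((ee 0 + b • ee 1) - b • ee 1) + b • ee 1 = pt x b
  rw [pt]; module

lemma lineMap_snd (a x : ℝ) :
    (AffineMap.lineMap (a • ee 0) (ee 1 + a • ee 0) : ℝ →ᵃ[ℝ] E2) x = pt a x := by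
  rw [AffineMap.lineMap_apply]
  show x • ((ee 1 + a • ee 0) - a • ee 0) + a • ee 0 = pt a x
  rw [pt]; module

lemma convex_line_fst (hconv : ConvexOn ℝ univ ψ) (b : ℝ) :
    ConvexOn ℝ univ (fun x => ψ (pt x b)) := by
  have := hconv.comp_affineMap (AffineMap.lineMap (b • ee 1) (ee 0 + b • ee 1))
  simp only [preimage_univ] at this
  have heq : (fun x => ψ (pt x b)) =
      ψ ∘ (AffineMap.lineMap (b • ee 1) (ee 0 + b • ee 1) : ℝ →ᵃ[ℝ] E2) := by
    funext x
    rw [Function.comp_apply, lineMap_fst]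
  rw [heq]; exact this

lemma convex_line_snd (hconv : ConvexOn ℝ univ ψ) (a : ℝ) :
    ConvexOn ℝ univ (fun y => ψ (pt a y)) := by
  have := hconv.comp_affineMap (AffineMap.lineMap (a • ee 0) (ee 1 + a • ee 0))
  simp only [preimage_univ] at this
  have heq : (fun y => ψ (pt a y)) =
      ψ ∘ (AffineMap.lineMap (a • ee 0) (ee 1 + a • ee 0) : ℝ →ᵃ[ℝ] E2) := by
    funext x
    rw [Function.comp_apply, lineMap_snd]
  rw [heq]; exact this

lemma cont_pt_snd (a : ℝ) : Continuous (fun y : ℝ => pt a y) := by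
  exact continuous_const.add (continuous_id.smul continuous_const)

lemma fderiv_apply_le_one (hlip : LipschitzWith 1 ψ) (y : E2) (i : Fin 2) :
    |fderiv ℝ ψ y (ee i)| ≤ 1 := by
  calc |fderiv ℝ ψ y (ee i)| ≤ ‖fderiv ℝ ψ y‖ * ‖ee i‖ := (fderiv ℝ ψ y).le_opNorm _
  _ ≤ 1 * 1 := by
      apply mul_le_mul _ _ (norm_nonneg _) zero_le_one
      · simpa using norm_fderiv_le_of_lipschitz ℝ hlip
      · simp [ee, EuclideanSpace.norm_single]
  _ = 1 := by norm_num

lemma psi_pt_zero (hlip : LipschitzWith 1 ψ)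
    (hψb : ∀ a b : ℝ, |a| < 1 → 0 < b → b ≤ 1 / 2 → 0 ≤ ψ (pt a b) ∧ ψ (pt a b) ≤ b)
    {a : ℝ} (ha : |a| < 1) : ψ (pt a 0) = 0 := by
  have htend : Filter.Tendsto (fun y : ℝ => ψ (pt a y)) (nhdsWithin 0 (Ioi 0))
      (nhds (ψ (pt a 0))) :=
    ((hlip.continuous.comp (cont_pt_snd a)).continuousAt.continuousWithinAt).tendsto
  have hev : ∀ᶠ y in nhdsWithin (0:ℝ) (Ioi 0), y ∈ Ioc (0:ℝ) (1/2) :=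
    Ioc_mem_nhdsGT_of_mem ⟨le_refl 0, by norm_num⟩
  have hidt : Filter.Tendsto (fun y : ℝ => y) (nhdsWithin 0 (Ioi 0)) (nhds (0:ℝ)) :=
    tendsto_nhdsWithin_of_tendsto_nhds Filter.tendsto_id
  have h1 : ψ (pt a 0) ≤ 0 := by
    refine le_of_tendsto_of_tendsto htend hidt ?_
    filter_upwards [hev] with y hy using (hψb a y ha hy.1 hy.2).2
  have h2 : (0:ℝ) ≤ ψ (pt a 0) := by
    refine le_of_tendsto_of_tendsto (tendsto_const_nhds) htend ?_
    filter_upwards [hev] with y hy using (hψb a y ha hy.1 hy.2).1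
  linarith

lemma deriv_nonneg_of_monotone_nbhd {g : ℝ → ℝ} {d a r : ℝ} (hr : 0 < r)
    (hm : ∀ x, x ∈ Ioo a (a + r) → g a ≤ g x) (hd : HasDerivAt g d a) : 0 ≤ d := by
  have h1 := hasDerivAt_iff_tendsto_slope.1 hd
  have h2 : Filter.Tendsto (slope g a) (nhdsWithin a (Ioi a)) (nhds d) :=
    h1.mono_left (nhdsWithin_mono a (fun x hx => ne_of_gt hx))
  refine ge_of_tendsto h2 ?_
  filter_upwards [Ioo_mem_nhdsGT_of_mem ⟨le_refl a, lt_add_of_pos_right a hr⟩] with x hx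
  rw [slope_def_field]
  exact div_nonneg (sub_nonneg.2 (hm x hx)) (sub_nonneg.2 hx.1.le)

lemma h11_nonneg (hC2 : ContDiffOn ℝ 2 ψ Strip) (hconv : ConvexOn ℝ univ ψ)
    {a b : ℝ} (ha : |a| < 1) (hb0 : 0 < b) (hb1 : b < 1) : 0 ≤ h11 ψ a b := by
  have ha' := abs_lt.1 ha
  refine deriv_nonneg_of_monotone_nbhd (g := fun x => p1 ψ x b) (r := 1 - a)
    (by linarith) ?_ (hasDerivAt_p1_fst hC2 (pt_mem_strip ha hb0 hb1))
  intro x hx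
  have hx1 : |x| < 1 := abs_lt.2 ⟨by linarith [hx.1], by linarith [hx.2]⟩
  have hconv' := convex_line_fst hconv b
  have hd1 := hasDerivAt_psi_fst hC2 (pt_mem_strip ha hb0 hb1)
  have hd2 := hasDerivAt_psi_fst hC2 (pt_mem_strip hx1 hb0 hb1)
  exact (hconv'.le_slope_of_hasDerivAt (mem_univ a) (mem_univ x) hx.1 hd1).trans
    (hconv'.slope_le_of_hasDerivAt (mem_univ a) (mem_univ x) hx.1 hd2)

lemma h22_nonneg (hC2 : ContDiffOn ℝ 2 ψ Strip) (hconv : ConvexOn ℝ univ ψ)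
    {a b : ℝ} (ha : |a| < 1) (hb0 : 0 < b) (hb1 : b < 1) : 0 ≤ h22 ψ a b := by
  refine deriv_nonneg_of_monotone_nbhd (g := fun y => p2 ψ a y) (r := 1 - b)
    (by linarith) ?_ (hasDerivAt_p2_snd hC2 (pt_mem_strip ha hb0 hb1))
  intro x hx
  have hx1 : 0 < x := lt_trans hb0 hx.1
  have hx2 : x < 1 := by linarith [hx.2]
  have hconv' := convex_line_snd hconv a
  have hd1 := hasDerivAt_psi_snd hC2 (pt_mem_strip ha hb0 hb1)
  have hd2 := hasDerivAt_psi_snd hC2 (pt_mem_strip ha hx1 hx2)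
  exact (hconv'.le_slope_of_hasDerivAt (mem_univ b) (mem_univ x) hx.1 hd1).trans
    (hconv'.slope_le_of_hasDerivAt (mem_univ b) (mem_univ x) hx.1 hd2)

lemma p2_nonneg (hC2 : ContDiffOn ℝ 2 ψ Strip) (hconv : ConvexOn ℝ univ ψ)
    (hlip : LipschitzWith 1 ψ)
    (hψb : ∀ a b : ℝ, |a| < 1 → 0 < b → b ≤ 1 / 2 → 0 ≤ ψ (pt a b) ∧ ψ (pt a b) ≤ b)
    {a b : ℝ} (ha : |a| < 1) (hb0 : 0 < b) (hb2 : b ≤ 1 / 2) : 0 ≤ p2 ψ a b := by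
  have hconv' := convex_line_snd hconv a
  have hd := hasDerivAt_psi_snd hC2 (pt_mem_strip ha hb0 (by linarith))
  have hs := hconv'.slope_le_of_hasDerivAt (mem_univ 0) (mem_univ b) hb0 hd
  rw [slope_def_field, psi_pt_zero hlip hψb ha, sub_zero, sub_zero] at hs
  exact le_trans (div_nonneg (hψb a b ha hb0 hb2).1 hb0.le) hs

lemma p2_le_one (hlip : LipschitzWith 1 ψ) (a b : ℝ) : p2 ψ a b ≤ 1 :=
  (le_abs_self _).trans (fderiv_apply_le_one hlip (pt a b) 1)

lemma p1_abs_le (hC2 : ContDiffOn ℝ 2 ψ Strip)  (hconv : ConvexOn ℝ univ ψ)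
    (hψb : ∀ a b : ℝ, |a| < 1 → 0 < b → b ≤ 1 / 2 → 0 ≤ ψ (pt a b) ∧ ψ (pt a b) ≤ b)
    {a b : ℝ} (ha : |a| ≤ 1/2) (hb0 : 0 < b) (hb2 : b ≤ 1 / 2) : |p1 ψ a b| ≤ 3 * b := by
  have ha' := abs_le.1 ha
  have ha1 : |a| < 1 := lt_of_le_of_lt ha (by norm_num)
  have h78 : |(7:ℝ)/8| < 1 := by rw [abs_of_pos] <;> norm_num
  have hm78 : |(-7:ℝ)/8| < 1 := by rw [abs_of_neg] <;> norm_num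
  have hb1 : b < 1 := by linarith
  have hconv' := convex_line_fst hconv b
  have hd := hasDerivAt_psi_fst hC2 (pt_mem_strip ha1 hb0 hb1)
  have hua := hψb a b ha1 hb0 hb2
  have hu2 := hψb (7/8) b h78 hb0 hb2
  have hu3 := hψb (-7/8) b hm78 hb0 hb2
  rw [abs_le]
  constructor
  · have hs := hconv'.slope_le_of_hasDerivAt (mem_univ ((-7:ℝ)/8)) (mem_univ a)
      (by linarith) hd
    rw [slope_def_field] at hs
    refine le_trans ?_ hs
    rw [le_div_iff₀ (by linarith)]
    nlinarith [hua.2, hu3.1]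
  · have hs := hconv'.le_slope_of_hasDerivAt (mem_univ a) (mem_univ ((7:ℝ)/8))
      (by linarith) hd
    rw [slope_def_field] at hs
    refine le_trans hs ?_
    rw [div_le_iff₀ (by linarith)]
    nlinarith [hua.1, hu2.2]

lemma cont_pt_prod : Continuous (fun q : ℝ × ℝ => pt q.1 q.2) :=
  (continuous_fst.smul continuous_const).add (continuous_snd.smul continuous_const)

lemma contOn_hij (hC2 : ContDiffOn ℝ 2 ψ Strip) (v w : E2) :
    ContinuousOn (fun q : ℝ × ℝ => fderiv ℝ (fderiv ℝ ψ) (pt q.1 q.2) v w)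
      ((fun q : ℝ × ℝ => pt q.1 q.2) ⁻¹' Strip) := by
  have h : ContinuousOn (fun q : ℝ × ℝ => fderiv ℝ (fderiv ℝ ψ) (pt q.1 q.2))
      ((fun q : ℝ × ℝ => pt q.1 q.2) ⁻¹' Strip) :=
    (contOn_fderiv2 hC2).comp cont_pt_prod.continuousOn (fun q hq => hq)
  exact (h.clm_apply continuousOn_const).clm_apply continuousOn_const

lemma contOn_h11_slice (hC2 : ContDiffOn ℝ 2 ψ Strip) {s : ℝ} (hs0 : 0 < s) (hs2 : s ≤ 1/2) :
    ContinuousOn (fun x => h11 ψ x s) (Icc (-(1:ℝ)/2) (1/2)) := by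
  have hc : Continuous (fun x : ℝ => pt x s) :=
    (continuous_id.smul continuous_const).add continuous_const
  have h : ContinuousOn (fun x : ℝ => fderiv ℝ (fderiv ℝ ψ) (pt x s))
      (Icc (-(1:ℝ)/2) (1/2)) := by
    refine (contOn_fderiv2 hC2).comp hc.continuousOn (fun x hx => ?_)
    exact pt_mem_strip (abs_lt.2 ⟨by linarith [hx.1], by linarith [hx.2]⟩) hs0 (by linarith)
  exact (h.clm_apply continuousOn_const).clm_apply continuousOn_const

lemma contOn_h22_slice (hC2 : ContDiffOn ℝ 2 ψ Strip) {a : ℝ} (ha : |a| < 1) {t : ℝ}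
    (ht0 : 0 < t) :
    ContinuousOn (fun s => h22 ψ a s) (Icc t (1/2)) := by
  have hc : Continuous (fun s : ℝ => pt a s) :=
    continuous_const.add (continuous_id.smul continuous_const)
  have h : ContinuousOn (fun s : ℝ => fderiv ℝ (fderiv ℝ ψ) (pt a s)) (Icc t (1/2)) := by
    refine (contOn_fderiv2 hC2).comp hc.continuousOn (fun s hs => ?_)
    exact pt_mem_strip ha (lt_of_lt_of_le ht0 hs.1) (by linarith [hs.2])
  exact (h.clm_apply continuousOn_const).clm_apply continuousOn_const

lemma ftc_h11 (hC2 : ContDiffOn ℝ 2 ψ Strip) (hconv : ConvexOn ℝ univ ψ)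
    (hψb : ∀ a b : ℝ, |a| < 1 → 0 < b → b ≤ 1 / 2 → 0 ≤ ψ (pt a b) ∧ ψ (pt a b) ≤ b)
    {s : ℝ} (hs0 : 0 < s) (hs2 : s ≤ 1/2) :
    ∫ x in Ioc (-(1:ℝ)/2) (1/2), h11 ψ x s ≤ 6 * s := by
  have huIcc : uIcc (-(1:ℝ)/2) (1/2) = Icc (-(1:ℝ)/2) (1/2) := uIcc_of_le (by norm_num)
  have hmem : ∀ x ∈ uIcc (-(1:ℝ)/2) (1/2), HasDerivAt (fun x => p1 ψ x s) (h11 ψ x s) x := by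
    intro x hx
    rw [huIcc] at hx
    exact hasDerivAt_p1_fst hC2
      (pt_mem_strip (abs_lt.2 ⟨by linarith [hx.1], by linarith [hx.2]⟩) hs0 (by linarith))
  have hint : IntervalIntegrable (fun x => h11 ψ x s) volume (-(1:ℝ)/2) (1/2) := by
    apply ContinuousOn.intervalIntegrable
    rw [huIcc]; exact contOn_h11_slice hC2 hs0 hs2
  have heq := intervalIntegral.integral_eq_sub_of_hasDerivAt hmem hint
  rw [intervalIntegral.integral_of_le (by norm_num : -(1:ℝ)/2 ≤ 1/2)] at heq
  rw [heq]
  have hb1 := p1_abs_le hC2 hconv hψb (a := 1/2) (by rw [abs_of_pos] <;> norm_num) hs0 hs2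
  have hb2 := p1_abs_le hC2 hconv hψb (a := -(1:ℝ)/2) (by rw [abs_of_neg] <;> norm_num) hs0 hs2
  rw [abs_le] at hb1 hb2
  linarith [hb1.2, hb2.1]

lemma ftc_h22 (hC2 : ContDiffOn ℝ 2 ψ Strip) (hconv : ConvexOn ℝ univ ψ)
    (hlip : LipschitzWith 1 ψ)
    (hψb : ∀ a b : ℝ, |a| < 1 → 0 < b → b ≤ 1 / 2 → 0 ≤ ψ (pt a b) ∧ ψ (pt a b) ≤ b)
    {a t : ℝ} (ha : |a| < 1) (ht0 : 0 < t) (ht2 : t ≤ 1/2) :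
    ∫ s in Ioc t (1/2), h22 ψ a s ≤ 1 := by
  have huIcc : uIcc t (1/2:ℝ) = Icc t (1/2) := uIcc_of_le ht2
  have hmem : ∀ s ∈ uIcc t (1/2:ℝ), HasDerivAt (fun s => p2 ψ a s) (h22 ψ a s) s := by
    intro s hs
    rw [huIcc] at hs
    exact hasDerivAt_p2_snd hC2 (pt_mem_strip ha (lt_of_lt_of_le ht0 hs.1) (by linarith [hs.2]))
  have hint : IntervalIntegrable (fun s => h22 ψ a s) volume t (1/2) := by
    apply ContinuousOn.intervalIntegrable
    rw [huIcc]; exact contOn_h22_slice hC2 ha ht0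
  have heq := intervalIntegral.integral_eq_sub_of_hasDerivAt hmem hint
  rw [intervalIntegral.integral_of_le ht2] at heq
  rw [heq]
  have h1 := p2_le_one hlip (ψ := ψ) a (1/2)
  have h2 := p2_nonneg hC2 hconv hlip hψb ha ht0 ht2
  linarith

lemma contOn_h22_xslice (hC2 : ContDiffOn ℝ 2 ψ Strip) {s : ℝ} (hs0 : 0 < s) (hs2 : s ≤ 1/2) :
    ContinuousOn (fun x => h22 ψ x s) (Icc (-(1:ℝ)/2) (1/2)) := by
  have hc : Continuous (fun x : ℝ => pt x s) :=
    (continuous_id.smul continuous_const).add continuous_const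
  have h : ContinuousOn (fun x : ℝ => fderiv ℝ (fderiv ℝ ψ) (pt x s))
      (Icc (-(1:ℝ)/2) (1/2)) := by
    refine (contOn_fderiv2 hC2).comp hc.continuousOn (fun x hx => ?_)
    exact pt_mem_strip (abs_lt.2 ⟨by linarith [hx.1], by linarith [hx.2]⟩) hs0 (by linarith)
  exact (h.clm_apply continuousOn_const).clm_apply continuousOn_const

lemma measurable_h11_slice (s : ℝ) : Measurable (fun x => h11 ψ x s) := by
  have m1 : Measurable (fderiv ℝ (fderiv ℝ ψ)) := measurable_fderiv ℝ (fderiv ℝ ψ)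
  have m2 : Measurable (fun x : ℝ => pt x s) :=
    ((continuous_id.smul continuous_const).add continuous_const).measurable
  have hL : Continuous (fun M : E2 →L[ℝ] (E2 →L[ℝ] ℝ) => M (ee 0) (ee 0)) := by
    exact ((ContinuousLinearMap.apply ℝ ℝ (ee 0)).continuous).comp
      (ContinuousLinearMap.apply ℝ (E2 →L[ℝ] ℝ) (ee 0)).continuous
  exact hL.measurable.comp (m1.comp m2)

lemma slice_bound (hC2 : ContDiffOn ℝ 2 ψ Strip) (hconv : ConvexOn ℝ univ ψ)
    (hψb : ∀ a b : ℝ, |a| < 1 → 0 < b → b ≤ 1 / 2 → 0 ≤ ψ (pt a b) ∧ ψ (pt a b) ≤ b)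
    {lam c : ℝ} (hlam : 0 < lam) (hc : 0 < c)
    (hdet : ∀ a b : ℝ, |a| < 1 → 0 < b → b ≤ 1/2 →
      lam * (c / (-Real.log b)) ≤ h11 ψ a b * h22 ψ a b)
    {s : ℝ} (hs0 : 0 < s) (hs2 : s ≤ 1/2) :
    lam * c / 24 * (1 / (s * (-Real.log s))) ≤ ∫ x in Ioc (-(1:ℝ)/2) (1/2), h22 ψ x s := by
  have hL : 0 < -Real.log s := by
    have := Real.log_neg hs0 (by linarith : s < 1); linarith
  set D : ℝ := lam * (c / (-Real.log s)) with hDdef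
  have hD : 0 < D := mul_pos hlam (div_pos hc hL)
  set f : ℝ → ℝ := fun x => h11 ψ x s with hfdef
  have hfm : Measurable f := measurable_h11_slice s
  set bad : Set ℝ := {x : ℝ | 12 * s ≤ f x} with hbaddef
  have hbadm : MeasurableSet bad := measurableSet_le measurable_const hfm
  set I : Set ℝ := Ioc (-(1:ℝ)/2) (1/2) with hIdef
  have hIm : MeasurableSet I := measurableSet_Ioc
  have hIcc : I ⊆ Icc (-(1:ℝ)/2) (1/2) := Ioc_subset_Icc_self
  have habs : ∀ x ∈ I, |x| < 1 := fun x hx =>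
    abs_lt.2 ⟨by linarith [hx.1], by linarith [hx.2]⟩
  have hfint : IntegrableOn f I := by
    exact ((contOn_h11_slice hC2 hs0 hs2).integrableOn_Icc).mono_set hIcc
  have hf0 : 0 ≤ᵐ[volume.restrict I] f := by
    refine (ae_restrict_iff' hIm).2 (Filter.Eventually.of_forall fun x hx => ?_)
    exact h11_nonneg hC2 hconv (habs x hx) hs0 (by linarith)
  have markov := mul_meas_ge_le_integral_of_nonneg hf0 hfint (12 * s)
  have hintle : ∫ x, f x ∂(volume.restrict I) ≤ 6 * s := ftc_h11 hC2 hconv hψb hs0 hs2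
  have hbadle : ((volume.restrict I) bad).toReal ≤ 1 / 2 := by
    have h0 : (0:ℝ) ≤ ((volume.restrict I) {x | 12 * s ≤ f x}).toReal := ENNReal.toReal_nonneg
    rw [measureReal_def] at markov
    nlinarith [markov.trans hintle]
  set Eset : Set ℝ := I \ bad with hEdef
  have hEm : MeasurableSet Eset := hIm.diff hbadm
  have hEfin : volume Eset ≠ ⊤ := by
    refine ne_top_of_le_ne_top ?_ (measure_mono (diff_subset.trans hIcc))
    simp [Real.volume_Icc]
  have hrb : (volume.restrict I) bad = volume (bad ∩ I) := Measure.restrict_apply hbadm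
  have hEA : 1 / 2 ≤ (volume Eset).toReal := by
    have hsub : I ⊆ Eset ∪ (bad ∩ I) := by
      intro x hx
      by_cases hxb : x ∈ bad
      · exact Or.inr ⟨hxb, hx⟩
      · exact Or.inl ⟨hx, hxb⟩
    have hle : volume I ≤ volume Eset + volume (bad ∩ I) :=
      (measure_mono hsub).trans (measure_union_le _ _)
    have hIvol : volume I = 1 := by
      rw [hIdef, Real.volume_Ioc]; norm_num
    have hbfin : volume (bad ∩ I) ≠ ⊤ := by
      refine ne_top_of_le_ne_top ?_ (measure_mono (inter_subset_right.trans hIcc))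
      simp [Real.volume_Icc]
    have := ENNReal.toReal_mono (by
        rw [ENNReal.add_ne_top]; exact ⟨hEfin, hbfin⟩) (hIvol ▸ hle)
    rw [ENNReal.toReal_one, ENNReal.toReal_add hEfin hbfin] at this
    rw [hrb] at hbadle
    linarith
  have hpt : ∀ x ∈ Eset, D / (12 * s) ≤ h22 ψ x s := by
    intro x hx
    have hxI : x ∈ I := hx.1
    have hxa := habs x hxI
    have hdet' := hdet x s hxa hs0 hs2
    have h220 : 0 ≤ h22 ψ x s := h22_nonneg hC2 hconv hxa hs0 (by linarith)
    have hfx : f x < 12 * s := not_le.1 hx.2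
    have : D ≤ 12 * s * h22 ψ x s := by
      refine hdet'.trans ?_
      have h110 : 0 ≤ f x := h11_nonneg hC2 hconv hxa hs0 (by linarith)
      nlinarith
    rw [div_le_iff₀ (by linarith : (0:ℝ) < 12 * s)]
    linarith [this]
  have hEint : IntegrableOn (fun x => h22 ψ x s) Eset := by
    exact ((contOn_h22_xslice hC2 hs0 hs2).integrableOn_Icc).mono_set
      (diff_subset.trans hIcc)
  have hconst := setIntegral_ge_of_const_le hEm hEfin hpt hEint
  have hmono : ∫ x in Eset, h22 ψ x s ≤ ∫ x in I, h22 ψ x s := by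
    refine setIntegral_mono_set (((contOn_h22_xslice hC2 hs0 hs2).integrableOn_Icc).mono_set
      hIcc) ?_ (HasSubset.Subset.eventuallyLE diff_subset)
    refine (ae_restrict_iff' hIm).2 (Filter.Eventually.of_forall fun x hx => ?_)
    exact h22_nonneg hC2 hconv (habs x hx) hs0 (by linarith)
  have hfinal : lam * c / 24 * (1 / (s * (-Real.log s))) ≤ D / (12 * s) * (1 / 2) := by
    rw [hDdef]
    rw [div_mul_eq_mul_div, mul_one_div]
    apply le_of_eq
    field_simp
    ring
  refine hfinal.trans (le_trans ?_ (hconst.trans hmono))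
  have : D / (12 * s) * (1/2) ≤ D / (12 * s) * (volume Eset).toReal := by
    apply mul_le_mul_of_nonneg_left (by linarith [hEA]) (by positivity)
  rw [smul_eq_mul, measureReal_def] at hconst ⊢
  linarith [this]

lemma hasDerivAt_negloglog {s : ℝ} (hs0 : 0 < s) (hs1 : s < 1) :
    HasDerivAt (fun u => -Real.log (-Real.log u)) (1 / (s * (-Real.log s))) s := by
  have hL : 0 < -Real.log s := by have := Real.log_neg hs0 hs1; linarith
  have h1 : HasDerivAt Real.log s⁻¹ s := Real.hasDerivAt_log (ne_of_gt hs0)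
  have h2 : HasDerivAt (fun u : ℝ => -Real.log u) (-s⁻¹) s := h1.neg
  have h3 : HasDerivAt Real.log (-Real.log s)⁻¹ (-Real.log s) :=
    Real.hasDerivAt_log (ne_of_gt hL)
  have h4 := (h3.comp s h2).neg
  refine (h4 : HasDerivAt (fun u => -Real.log (-Real.log u)) _ s).congr_deriv ?_
  ring

lemma loglog_integrable {t : ℝ} (ht0 : 0 < t) (ht2 : t < 1/2) :
    IntegrableOn (fun s => 1 / (s * (-Real.log s))) (Ioc t (1/2)) := by
  refine (ContinuousOn.integrableOn_Icc ?_).mono_set Ioc_subset_Icc_self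
  refine continuousOn_const.div ?_ (fun s hs => ?_)
  · refine continuousOn_id.mul (ContinuousOn.neg ?_)
    exact Real.continuousOn_log.comp continuousOn_id
      (fun s hs => by simp; intro h; rw [h] at hs; exact absurd hs.1 (by norm_num [ht0.le]; linarith))
  · have hs0 : 0 < s := lt_of_lt_of_le ht0 hs.1
    have hs1 : s < 1 := by have := hs.2; linarith
    have hL : 0 < -Real.log s := by have := Real.log_neg hs0 hs1; linarith
    have : (0:ℝ) < s * (-Real.log s) := mul_pos hs0 hL
    exact ne_of_gt this

lemma loglog_integral {t : ℝ} (ht0 : 0 < t) (ht2 : t < 1/2) :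
    ∫ s in Ioc t (1/2), 1 / (s * (-Real.log s)) =
      Real.log (-Real.log t) - Real.log (Real.log 2) := by
  have hmem : ∀ s ∈ uIcc t (1/2:ℝ), HasDerivAt (fun u => -Real.log (-Real.log u))
      (1 / (s * (-Real.log s))) s := by
    intro s hs
    rw [uIcc_of_le ht2.le] at hs
    exact hasDerivAt_negloglog (lt_of_lt_of_le ht0 hs.1) (by linarith [hs.2])
  have hint : IntervalIntegrable (fun s => 1 / (s * (-Real.log s))) volume t (1/2) := by
    rw [intervalIntegrable_iff_integrableOn_Ioc_of_le ht2.le]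
    exact loglog_integrable ht0 ht2
  have heq := intervalIntegral.integral_eq_sub_of_hasDerivAt hmem hint
  rw [intervalIntegral.integral_of_le ht2.le] at heq
  rw [heq]
  have hhalf : -Real.log (1/2 : ℝ) = Real.log 2 := by
    rw [show (1:ℝ)/2 = 2⁻¹ by norm_num, Real.log_inv, neg_neg]
  rw [hhalf]
  ring

lemma fubini_setup (hC2 : ContDiffOn ℝ 2 ψ Strip) {t : ℝ} (ht0 : 0 < t) (ht2 : t < 1/2) :
    Integrable (Function.uncurry (fun x s => h22 ψ x s))
      ((volume.restrict (Ioc (-(1:ℝ)/2) (1/2))).prod (volume.restrict (Ioc t (1/2)))) := by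
  rw [Measure.prod_restrict, ← Measure.volume_eq_prod]
  have hcont : ContinuousOn (fun q : ℝ × ℝ => h22 ψ q.1 q.2)
      (Icc (-(1:ℝ)/2) (1/2) ×ˢ Icc t (1/2)) := by
    refine (contOn_hij hC2 (ee 1) (ee 1)).mono (fun q hq => ?_)
    refine pt_mem_strip (abs_lt.2 ⟨by linarith [hq.1.1], by linarith [hq.1.2]⟩)
      (lt_of_lt_of_le ht0 hq.2.1) (by linarith [hq.2.2])
  have h2 := hcont.integrableOn_compact (μ := volume) (isCompact_Icc.prod isCompact_Icc)
  exact (h2.mono_set (prod_mono Ioc_subset_Icc_self Ioc_subset_Icc_self))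

lemma main_contra (hC2 : ContDiffOn ℝ 2 ψ Strip) (hconv : ConvexOn ℝ univ ψ)
    (hlip : LipschitzWith 1 ψ)
    (hψb : ∀ a b : ℝ, |a| < 1 → 0 < b → b ≤ 1 / 2 → 0 ≤ ψ (pt a b) ∧ ψ (pt a b) ≤ b)
    {lam c : ℝ} (hlam : 0 < lam) (hc : 0 < c)
    (hdet : ∀ a b : ℝ, |a| < 1 → 0 < b → b ≤ 1/2 →
      lam * (c / (-Real.log b)) ≤ h11 ψ a b * h22 ψ a b) : False := by
  set K : ℝ := lam * c / 24 with hK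
  have hKpos : 0 < K := by positivity
  set A : ℝ := 24 / (lam * c) + Real.log (Real.log 2) + 1 with hA
  set t : ℝ := Real.exp (-Real.exp A) with ht
  have ht0 : 0 < t := Real.exp_pos _
  have hlogt : -Real.log t = Real.exp A := by rw [ht, Real.log_exp, neg_neg]
  have hlog2pos : 0 < Real.log 2 := Real.log_pos one_lt_two
  have ht2 : t < 1/2 := by
    rw [ht, show (1:ℝ)/2 = Real.exp (Real.log (1/2)) from (Real.exp_log (by norm_num)).symm]
    apply Real.exp_lt_exp.2
    have h1 : Real.log (1/2 : ℝ) = -Real.log 2 := by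
      rw [show (1:ℝ)/2 = 2⁻¹ by norm_num, Real.log_inv]
    rw [h1, neg_lt_neg_iff]
    calc Real.log 2 = Real.exp (Real.log (Real.log 2)) := (Real.exp_log hlog2pos).symm
    _ < Real.exp A := Real.exp_lt_exp.2 (by
          have h24 : 0 < 24 / (lam * c) := by positivity
          rw [hA]; linarith)
  set I : Set ℝ := Ioc (-(1:ℝ)/2) (1/2) with hI
  set J : Set ℝ := Ioc t (1/2) with hJ
  have habs : ∀ x ∈ I, |x| < 1 := fun x hx =>
    abs_lt.2 ⟨by linarith [hx.1], by linarith [hx.2]⟩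
  have hFint := fubini_setup hC2 ht0 ht2
  -- lower bound
  have hlow : 1 + K ≤ ∫ s in J, ∫ x in I, h22 ψ x s := by
    have hmono : ∫ s in J, K * (1 / (s * (-Real.log s))) ≤ ∫ s in J, ∫ x in I, h22 ψ x s := by
      refine setIntegral_mono_on ?_ ?_ measurableSet_Ioc (fun s hs => ?_)
      · exact ((loglog_integrable ht0 ht2).const_mul K)
      · exact hFint.integral_prod_right
      · have hs0 : 0 < s := lt_trans ht0 hs.1
        have hs2 : s ≤ 1/2 := hs.2
        have := slice_bound hC2 hconv hψb hlam hc hdet hs0 hs2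
        calc K * (1 / (s * (-Real.log s))) = lam * c / 24 * (1 / (s * (-Real.log s))) := by
              rw [hK]
        _ ≤ _ := this
    have hval : ∫ s in J, K * (1 / (s * (-Real.log s))) = 1 + K := by
      rw [integral_const_mul, loglog_integral ht0 ht2, hlogt, Real.log_exp, hA, hK]
      field_simp
      ring
    linarith [hmono, hval.symm.le]
  -- upper bound via Fubini
  have hswap : ∫ x in I, ∫ s in J, h22 ψ x s = ∫ s in J, ∫ x in I, h22 ψ x s :=
    integral_integral_swap hFint
  have hup : ∫ x in I, ∫ s in J, h22 ψ x s ≤ 1 := by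
    have hmono : ∫ x in I, ∫ s in J, h22 ψ x s ≤ ∫ x in I, (1:ℝ) := by
      have hconst : IntegrableOn (fun _ : ℝ => (1:ℝ)) I volume := by
        refine integrableOn_const ?_
        rw [hI, Real.volume_Ioc]
        norm_num
      refine setIntegral_mono_on ?_ hconst measurableSet_Ioc (fun x hx => ?_)
      · exact hFint.integral_prod_left
      · exact ftc_h22 hC2 hconv hlip hψb (habs x hx) ht0 ht2.le
    have : ∫ x in I, (1:ℝ) = 1 := by
      rw [setIntegral_const, hI, measureReal_def, Real.volume_Ioc]
      norm_num
    linarith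
  rw [← hswap] at hlow
  linarith

end Stmt16Aux

/-- There is no convex, 1-Lipschitz function `ψ : ℝ² → ℝ`, of class `C²`
on the strip `(−1,1) × (0,1)`, satisfying `0 ≤ ψ ≤ y₂`, `det D²ψ ≥ λ|∇ψ|` and
`|∇ψ| ≥ c/|log y₂|` for all `|y₁| < 1`, `0 < y₂ ≤ 1/2`. -/
theorem stmt16 :
    ¬ ∃ (lam c : ℝ) (ψ : EuclideanSpace ℝ (Fin 2) → ℝ),
      0 < lam ∧ 0 < c ∧
      ConvexOn ℝ Set.univ ψ ∧
      LipschitzWith 1 ψ ∧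
      ContDiffOn ℝ 2 ψ
        {y : EuclideanSpace ℝ (Fin 2) | y 0 ∈ Set.Ioo (-1 : ℝ) 1 ∧ y 1 ∈ Set.Ioo (0 : ℝ) 1} ∧
      ∀ y : EuclideanSpace ℝ (Fin 2), |y 0| < 1 → 0 < y 1 → y 1 ≤ 1 / 2 →
        (0 ≤ ψ y ∧ ψ y ≤ y 1) ∧
        lam * ‖gradient ψ y‖ ≤
          (fderiv ℝ (fun z => fderiv ℝ ψ z) y (EuclideanSpace.single 0 1)
              (EuclideanSpace.single 0 1)) *
            (fderiv ℝ (fun z => fderiv ℝ ψ z) y (EuclideanSpace.single 1 1)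
              (EuclideanSpace.single 1 1)) -
          (fderiv ℝ (fun z => fderiv ℝ ψ z) y (EuclideanSpace.single 0 1)
              (EuclideanSpace.single 1 1)) *
            (fderiv ℝ (fun z => fderiv ℝ ψ z) y (EuclideanSpace.single 1 1)
              (EuclideanSpace.single 0 1)) ∧
        c / |Real.log (y 1)| ≤ ‖gradient ψ y‖ := by
  rintro ⟨lam, c, ψ, hlam, hc, hconv, hlip, hC2', hmain⟩
  have hC2 : ContDiffOn ℝ 2 ψ Strip := hC2'
  have hψb : ∀ a b : ℝ, |a| < 1 → 0 < b → b ≤ 1 / 2 → 0 ≤ ψ (pt a b) ∧ ψ (pt a b) ≤ b := by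
    intro a b ha hb0 hb2
    have := (hmain (pt a b) (by simpa using ha) (by simpa using hb0) (by simpa using hb2)).1
    simpa using this
  have hdet : ∀ a b : ℝ, |a| < 1 → 0 < b → b ≤ 1/2 →
      lam * (c / (-Real.log b)) ≤ h11 ψ a b * h22 ψ a b := by
    intro a b ha hb0 hb2
    obtain ⟨-, h2, h3⟩ :=
      hmain (pt a b) (by simpa using ha) (by simpa using hb0) (by simpa using hb2)
    have hb1 : b < 1 := by linarith
    have habs : |Real.log ((pt a b) 1)| = -Real.log b := by
      rw [pt_apply1, abs_of_neg (Real.log_neg hb0 hb1)]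
    rw [habs] at h3
    have hsym : fderiv ℝ (fderiv ℝ ψ) (pt a b) (ee 0) (ee 1)
        = fderiv ℝ (fderiv ℝ ψ) (pt a b) (ee 1) (ee 0) :=
      snd_symm hC2 (pt_mem_strip ha hb0 hb1) (ee 0) (ee 1)
    have h2' : lam * ‖gradient ψ (pt a b)‖ ≤ h11 ψ a b * h22 ψ a b -
        fderiv ℝ (fderiv ℝ ψ) (pt a b) (ee 0) (ee 1) *
        fderiv ℝ (fderiv ℝ ψ) (pt a b) (ee 1) (ee 0) := h2
    rw [← hsym] at h2'
    have hgrad : lam * (c / (-Real.log b)) ≤ lam * ‖gradient ψ (pt a b)‖ :=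
      mul_le_mul_of_nonneg_left h3 hlam.le
    nlinarith [sq_nonneg (fderiv ℝ (fderiv ℝ ψ) (pt a b) (ee 0) (ee 1))]
  exact main_contra hC2 hconv hlip hψb hlam hc hdet
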